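/- Step inequality from the duality formula proof: let X be a normed space, f : X → (-∞,+∞] lsc, x̄ ∈ dom f, u, v ∈ X, α ≥ 0, and λ ∈ ℝ. If there exists δ > 0 such that f^d(x; u + α(x̄ − x)) < λ for all x ∈ D(x̄, v, δ), and if the subderivative link f^↑(z;w) ≤ sup_{ε>0} limsup_{x→z} inf_{w'∈B(w,ε)} f^d(x;w') holds at every point, then f^↑(z; u + α(x̄ − z)) ≤ λ for all z ∈ D(x̄, v, δ/2). Consequently limsup_{x→_v x̄} f^↑(x; u+α(x̄−x)) ≤ limsup_{x→_v x̄} f^d(x; u+α(x̄−x)). -/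

import Mathlib

open Filter Topology

/-- Lower radial subderivative `f^r(x;u)`. -/
noncomputable def radial {X : Type*} [NormedAddCommGroup X] [NormedSpace ℝ X]
    (f : X → EReal) (x u : X) : EReal :=
  Filter.liminf (fun t : ℝ => ((t⁻¹ : ℝ) : EReal) * (f (x + t • u) - f x)) (𝓝[>] (0:ℝ))

/-- Upper radial subderivative `f^r_+(x;u)`. -/
noncomputable def radialPlus {X : Type*} [NormedAddCommGroup X] [NormedSpace ℝ X]
    (f : X → EReal) (x u : X) : EReal :=
  Filter.limsup (fun t : ℝ => ((t⁻¹ : ℝ) : EReal) * (f (x + t • u) - f x)) (𝓝[>] (0:ℝ))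

/-- The "drop" `xbar + ]0, ε B(v,ε)[`. -/
def drop {X : Type*} [NormedAddCommGroup X] [NormedSpace ℝ X]
    (xbar v : X) (ε : ℝ) : Set X :=
  {y | ∃ t : ℝ, ∃ v' : X, 0 < t ∧ t < ε ∧ ‖v' - v‖ < ε ∧ y = xbar + t • v'}

/-- The filter of directional convergence `x →_v xbar`. -/
noncomputable def dirFilter {X : Type*} [NormedAddCommGroup X] [NormedSpace ℝ X]
    (xbar v : X) : Filter X :=
  ⨅ ε : {e : ℝ // 0 < e}, Filter.principal (drop xbar v (ε : ℝ))

/-- Dini–Hadamard directional subderivative `f^d(x;u)`. -/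
noncomputable def dirSub {X : Type*} [NormedAddCommGroup X] [NormedSpace ℝ X]
    (f : X → EReal) (x u : X) : EReal :=
  Filter.liminf (fun p : ℝ × X => ((p.1⁻¹ : ℝ) : EReal) * (f (x + p.1 • p.2) - f x))
    ((𝓝[>] (0:ℝ)) ×ˢ (𝓝 u))

/-- Clarke–Rockafellar subderivative `f^↑(z;w)`. -/
noncomputable def clarkeRock {X : Type*} [NormedAddCommGroup X] [NormedSpace ℝ X]
    (f : X → EReal) (z w : X) : EReal :=
  ⨆ d : {d : ℝ // 0 < d},
    Filter.limsup (fun p : ℝ × X =>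
        ⨅ w' : Metric.ball w (d : ℝ),
          ((p.1⁻¹ : ℝ) : EReal) * (f (p.2 + p.1 • (w' : X)) - f p.2))
      ((𝓝[>] (0:ℝ)) ×ˢ ((𝓝 z) ⊓ Filter.comap f (𝓝 (f z))))


lemma drop_mono {X : Type*} [NormedAddCommGroup X] [NormedSpace ℝ X]
    (xbar v : X) {ε ε' : ℝ} (h : ε ≤ ε') : drop xbar v ε ⊆ drop xbar v ε' := by
  rintro y ⟨t, v', ht, h1, h2, rfl⟩
  exact ⟨t, v', ht, h1.trans_le h, h2.trans_le h, rfl⟩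

lemma mem_dirFilter {X : Type*} [NormedAddCommGroup X] [NormedSpace ℝ X]
    (xbar v : X) (s : Set X) :
    s ∈ dirFilter xbar v ↔ ∃ ε : ℝ, 0 < ε ∧ drop xbar v ε ⊆ s := by
  have hdir : Directed (· ≥ ·)
      (fun ε : {e : ℝ // 0 < e} => Filter.principal (drop xbar v (ε : ℝ))) := by
    rintro ⟨a, ha⟩ ⟨b, hb⟩
    exact ⟨⟨min a b, lt_min ha hb⟩,
      Filter.principal_mono.2 (drop_mono xbar v (min_le_left a b)),
      Filter.principal_mono.2 (drop_mono xbar v (min_le_right a b))⟩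
  haveI : Nonempty {e : ℝ // 0 < e} := ⟨⟨1, one_pos⟩⟩
  rw [dirFilter, Filter.mem_iInf_of_directed hdir]
  constructor
  · rintro ⟨⟨ε, hε⟩, hs⟩
    exact ⟨ε, hε, Filter.mem_principal.1 hs⟩
  · rintro ⟨ε, hε, hs⟩
    exact ⟨⟨ε, hε⟩, Filter.mem_principal.2 hs⟩

set_option maxHeartbeats 1000000 in
lemma aux_step {X : Type*} [NormedAddCommGroup X] [NormedSpace ℝ X]
    (f : X → EReal) (xbar u v : X) (α : ℝ) (hα : 0 ≤ α)
    (hTreiman : ∀ z w : X, clarkeRock f z w ≤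
      ⨆ ε : {e : ℝ // 0 < e},
        Filter.limsup (fun x => ⨅ w' : Metric.ball w (ε : ℝ), dirSub f x (w' : X)) (𝓝 z))
    (lam δ : ℝ) (hδ : 0 < δ)
    (hbound : ∀ x ∈ drop xbar v δ, dirSub f x (u + α • (xbar - x)) < (lam : EReal)) :
    ∀ z ∈ drop xbar v (δ / 2), clarkeRock f z (u + α • (xbar - z)) ≤ (lam : EReal) := by
  rintro z ⟨t, v', ht, htδ, hv', rfl⟩
  set z : X := xbar + t • v' with hz
  refine (hTreiman z (u + α • (xbar - z))).trans (iSup_le ?_)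
  rintro ⟨ε, hε⟩
  have hα1 : (0:ℝ) < α + 1 := by linarith
  have hvv : ‖v' - v‖ < δ := by linarith
  set ρ : ℝ := min (ε / (α + 1)) (t * (δ - ‖v' - v‖)) with hρdef
  have hρ : 0 < ρ := by
    apply lt_min
    · positivity
    · apply mul_pos ht; linarith
  refine Filter.limsup_le_of_le (by isBoundedDefault) ?_
  filter_upwards [Metric.ball_mem_nhds z hρ] with x hx
  have hxz : ‖x - z‖ < ρ := by
    rw [Metric.mem_ball, dist_eq_norm] at hx; exact hx
  have hmem : (u + α • (xbar - x)) ∈ Metric.ball (u + α • (xbar - z)) ε := by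
    rw [Metric.mem_ball, dist_eq_norm]
    have he : (u + α • (xbar - x)) - (u + α • (xbar - z)) = α • (z - x) := by
      module
    rw [he, norm_smul, Real.norm_eq_abs, abs_of_nonneg hα]
    have h1 : ‖z - x‖ < ε / (α + 1) := by
      rw [norm_sub_rev] at hxz
      exact hxz.trans_le (min_le_left _ _)
    calc α * ‖z - x‖ ≤ α * (ε / (α + 1)) :=
          mul_le_mul_of_nonneg_left h1.le hα
      _ < ε := by
          rw [mul_div_assoc', div_lt_iff₀ hα1]
          nlinarith
  have hxdrop : x ∈ drop xbar v δ := by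
    refine ⟨t, v' + t⁻¹ • (x - z), ht, by linarith, ?_, ?_⟩
    · have h2 : ‖x - z‖ < t * (δ - ‖v' - v‖) := hxz.trans_le (min_le_right _ _)
      have h3 : ‖v' + t⁻¹ • (x - z) - v‖ ≤ ‖v' - v‖ + ‖t⁻¹ • (x - z)‖ := by
        have h4 : v' + t⁻¹ • (x - z) - v = (v' - v) + t⁻¹ • (x - z) := by abel
        rw [h4]; exact norm_add_le _ _
      refine h3.trans_lt ?_
      rw [norm_smul, Real.norm_eq_abs, abs_of_pos (inv_pos.2 ht)]
      have h5 : t⁻¹ * ‖x - z‖ < t⁻¹ * (t * (δ - ‖v' - v‖)) :=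
        mul_lt_mul_of_pos_left h2 (inv_pos.2 ht)
      rw [inv_mul_cancel_left₀ (ne_of_gt ht)] at h5
      linarith
    · rw [smul_add, smul_smul, mul_inv_cancel₀ (ne_of_gt ht), one_smul, hz]
      abel
  have h6 := iInf_le (fun w' : Metric.ball (u + α • (xbar - z)) (ε:ℝ) => dirSub f x (w' : X)) ⟨_, hmem⟩
  exact h6.trans (hbound x hxdrop).le

theorem duality_formula_step {X : Type*} [NormedAddCommGroup X] [NormedSpace ℝ X]
    (f : X → EReal) (hf : LowerSemicontinuous f) (hbot : ∀ y, f y ≠ ⊥)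
    (xbar : X) (hxbar : f xbar ≠ ⊤) (u v : X) (α : ℝ) (hα : 0 ≤ α) (lam : ℝ)
    (hTreiman : ∀ z w : X, clarkeRock f z w ≤
      ⨆ ε : {e : ℝ // 0 < e},
        Filter.limsup (fun x => ⨅ w' : Metric.ball w (ε : ℝ), dirSub f x (w' : X)) (𝓝 z))
    (δ : ℝ) (hδ : 0 < δ)
    (hbound : ∀ x ∈ drop xbar v δ, dirSub f x (u + α • (xbar - x)) < (lam : EReal)) :
    (∀ z ∈ drop xbar v (δ / 2), clarkeRock f z (u + α • (xbar - z)) ≤ (lam : EReal)) ∧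
    Filter.limsup (fun x => clarkeRock f x (u + α • (xbar - x))) (dirFilter xbar v) ≤
      Filter.limsup (fun x => dirSub f x (u + α • (xbar - x))) (dirFilter xbar v) := by
  constructor
  · exact aux_step f xbar u v α hα hTreiman lam δ hδ hbound
  · refine le_of_forall_gt_imp_ge_of_dense fun c hc => ?_
    obtain ⟨r, hr1, hr2⟩ := EReal.exists_between_coe_real hc
    have hev : ∀ᶠ x in dirFilter xbar v,
        dirSub f x (u + α • (xbar - x)) < (r : EReal) :=
      Filter.eventually_lt_of_limsup_lt hr1
    obtain ⟨ε, hε, hsub⟩ := (mem_dirFilter xbar v _).1 hev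
    have haux := aux_step f xbar u v α hα hTreiman r ε hε fun x hx => hsub hx
    have hev2 : ∀ᶠ x in dirFilter xbar v,
        clarkeRock f x (u + α • (xbar - x)) ≤ (r : EReal) :=
      (mem_dirFilter xbar v _).2 ⟨ε / 2, by linarith, fun x hx => haux x hx⟩
    exact (Filter.limsup_le_of_le (by isBoundedDefault) hev2).trans hr2.le
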